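/- For any extensive form game G and any formula φ ∈ Φ with ⟦φ⟧ ⊊ Ω(G), it holds that ⟦G^c_i(φ)⟧ = ∅ for every integer i ≥ |Ω(G)| − 1, where |Ω(G)| is the number of outcomes of G. -/

import Mathlib

/-- An extensive form game: a nonempty finite rooted tree. Nodes are represented as
positions, i.e. lists of child indices with the *head* being the most recent step,
so the root is `[]` and the parent of `i :: t` is `t`. Each node carries an agent
label (meaningful on non-leaf nodes) and a set of propositional variables
(meaningful on leaf nodes, the outcomes). -/
structure Game (Agent PropVar : Type) where
  Node : Set (List ℕ)
  root_mem : [] ∈ Node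
  downward : ∀ (i : ℕ) (t : List ℕ), i :: t ∈ Node → t ∈ Node
  finite : Node.Finite
  label : List ℕ → Agent
  leafLabel : List ℕ → Set PropVar

namespace Game

variable {Agent PropVar : Type}

/-- A leaf node (outcome) of the game. -/
def IsOutcome (G : Game Agent PropVar) (w : List ℕ) : Prop :=
  w ∈ G.Node ∧ ∀ i : ℕ, i :: w ∉ G.Node

/-- The set `Ω(G)` of outcomes (leaf nodes) of the game. -/
def outcomes (G : Game Agent PropVar) : Set (List ℕ) := {w | G.IsOutcome w}

/-- `w ⪯ n`: node `n` lies on the simple path (including endpoints) from the root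
to `w`; in the position representation this means `n` is a suffix of `w`. -/
def below (w n : List ℕ) : Prop := n <:+ w

/-- A non-root node `n` is an `X`-achievement point by agent `a` if (1) its parent is
labelled with `a`, (2) some outcome `w ⪯ parent(n)` is not in `X`, and (3) every
outcome `w ⪯ n` is in `X`. -/
def AchievePoint (G : Game Agent PropVar) (X : Set (List ℕ)) (a : Agent) (n : List ℕ) : Prop :=
  ∃ (i : ℕ) (t : List ℕ), n = i :: t ∧ n ∈ G.Node ∧ G.label t = a ∧
    (∃ w ∈ G.outcomes, t <:+ w ∧ w ∉ X) ∧
    (∀ w ∈ G.outcomes, n <:+ w → w ∈ X)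

/-- `win_a(X)`: the minimal set of nodes containing `X`, containing every non-leaf
node labelled `a` with at least one child in the set, and containing every non-leaf
node not labelled `a` all of whose children are in the set. -/
inductive Win (G : Game Agent PropVar) (a : Agent) (X : Set (List ℕ)) : List ℕ → Prop
  | mem (w : List ℕ) (hw : w ∈ X) : Win G a X w
  | own (n : List ℕ) (hn : n ∈ G.Node) (hl : G.label n = a) (i : ℕ)
      (hi : i :: n ∈ G.Node) (h : Win G a X (i :: n)) : Win G a X n
  | other (n : List ℕ) (hn : n ∈ G.Node) (hl : G.label n ≠ a)
      (hne : ∃ i : ℕ, i :: n ∈ G.Node)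
      (h : ∀ i : ℕ, i :: n ∈ G.Node → Win G a X (i :: n)) : Win G a X n

/-- The semantic counterfactual-responsibility operator on sets of outcomes:
`Cset a X` is the set of outcomes `w ∈ X` such that some node `n` with `w ⪯ n`
belongs to `win_a(Ω(G) ∖ X)`. -/
def Cset (G : Game Agent PropVar) (a : Agent) (X : Set (List ℕ)) : Set (List ℕ) :=
  {w | w ∈ X ∧ ∃ n : List ℕ, n <:+ w ∧ G.Win a (G.outcomes \ X) n}

/-- The semantic seeing-to-it-responsibility operator on sets of outcomes:
`Sset a X` is the set of outcomes `w` such that (a) every node `n` with `w ⪯ n`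
belongs to `win_a(X)` and (b) there is an `X`-achievement point `n` by agent `a`
with `w ⪯ n`. -/
def Sset (G : Game Agent PropVar) (a : Agent) (X : Set (List ℕ)) : Set (List ℕ) :=
  {w | w ∈ G.outcomes ∧ (∀ n : List ℕ, n <:+ w → G.Win a X n) ∧
    ∃ n : List ℕ, G.AchievePoint X a n ∧ n <:+ w}

end Game

/-- The language `Φ`: `φ ::= p | ¬φ | φ∧φ | C_a φ | S_a φ`. -/
inductive Formula (Agent PropVar : Type) where
  | var : PropVar → Formula Agent PropVar
  | neg : Formula Agent PropVar → Formula Agent PropVar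
  | and : Formula Agent PropVar → Formula Agent PropVar → Formula Agent PropVar
  | C : Agent → Formula Agent PropVar → Formula Agent PropVar
  | S : Agent → Formula Agent PropVar → Formula Agent PropVar

namespace Game

variable {Agent PropVar : Type}

/-- The truth set `⟦φ⟧ ⊆ Ω(G)` of a formula. -/
def truth (G : Game Agent PropVar) : Formula Agent PropVar → Set (List ℕ)
  | .var p => {w | w ∈ G.outcomes ∧ p ∈ G.leafLabel w}
  | .neg φ => G.outcomes \ G.truth φ
  | .and φ ψ => G.truth φ ∩ G.truth ψ
  | .C a φ => G.Cset a (G.truth φ)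
  | .S a φ => G.Sset a (G.truth φ)

/-- The truth set of the `i`-th order counterfactual gap formula
`G^c_0(φ) := φ`, `G^c_{i+1}(φ) := G^c_i(φ) ∧ ⋀_{a∈𝒜} ¬C_a G^c_i(φ)`. -/
def gapCIter (G : Game Agent PropVar) (φ : Formula Agent PropVar) : ℕ → Set (List ℕ)
  | 0 => G.truth φ
  | i + 1 => G.gapCIter φ i ∩ ⋂ a : Agent, (G.outcomes \ G.Cset a (G.gapCIter φ i))

/-- The truth set of the `i`-th order combined gap formula
`G^{c,s}_0(φ) := φ`,
`G^{c,s}_{i+1}(φ) := G^{c,s}_i(φ) ∧ ⋀_{a∈𝒜} ¬C_a G^{c,s}_i(φ) ∧ ⋀_{a∈𝒜} ¬S_a G^{c,s}_i(φ)`. -/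
def gapCSIter (G : Game Agent PropVar) (φ : Formula Agent PropVar) : ℕ → Set (List ℕ)
  | 0 => G.truth φ
  | i + 1 => G.gapCSIter φ i ∩ (⋂ a : Agent, (G.outcomes \ G.Cset a (G.gapCSIter φ i)))
      ∩ (⋂ a : Agent, (G.outcomes \ G.Sset a (G.gapCSIter φ i)))

end Game

/-- `φ` contains no occurrence of the modality `C`. -/
def Formula.noC {Agent PropVar : Type} : Formula Agent PropVar → Prop
  | .var _ => True
  | .neg φ => φ.noC
  | .and φ ψ => φ.noC ∧ ψ.noC
  | .C _ _ => False
  | .S _ φ => φ.noC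

/-- `φ` contains no occurrence of the modality `S`. -/
def Formula.noS {Agent PropVar : Type} : Formula Agent PropVar → Prop
  | .var _ => True
  | .neg φ => φ.noS
  | .and φ ψ => φ.noS ∧ ψ.noS
  | .C _ φ => φ.noS
  | .S _ _ => False

namespace Game

variable {Agent PropVar : Type}

/-- suffixes of nodes are nodes -/
lemma aux_suffix_node (G : Game Agent PropVar) {s : List ℕ} :
    ∀ l : List ℕ, l ++ s ∈ G.Node → s ∈ G.Node := by
  intro l
  induction l with
  | nil => simp
  | cons i l ih => intro h; exact ih (G.downward i (l ++ s) h)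

lemma aux_node_of_suffix (G : Game Agent PropVar) {w s : List ℕ}
    (hw : w ∈ G.Node) (hs : s <:+ w) : s ∈ G.Node := by
  obtain ⟨l, rfl⟩ := hs
  exact G.aux_suffix_node l hw

lemma aux_exists_bound (G : Game Agent PropVar) :
    ∃ B, ∀ n ∈ G.Node, n.length ≤ B := by
  obtain ⟨B, hB⟩ := (G.finite.image List.length).bddAbove
  exact ⟨B, fun n hn => hB ⟨n, hn, rfl⟩⟩

lemma aux_exists_outcome_below (G : Game Agent PropVar) {n : List ℕ} (hn : n ∈ G.Node) :
    ∃ w ∈ G.outcomes, n <:+ w := by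
  obtain ⟨B, hB⟩ := G.aux_exists_bound
  suffices H : ∀ k, ∀ n, n ∈ G.Node → B ≤ n.length + k → ∃ w ∈ G.outcomes, n <:+ w by
    exact H B n hn (by omega)
  intro k
  induction k with
  | zero =>
    intro n hn hlen
    refine ⟨n, ⟨hn, fun i hi => ?_⟩, List.suffix_refl n⟩
    have := hB _ hi
    simp [List.length_cons] at this
    omega
  | succ k ih =>
    intro n hn hlen
    by_cases h : ∃ i, i :: n ∈ G.Node
    · obtain ⟨i, hi⟩ := h
      obtain ⟨w, hw, hsuf⟩ := ih (i :: n) hi (by simp [List.length_cons]; omega)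
      exact ⟨w, hw, (List.suffix_cons i n).trans hsuf⟩
    · exact ⟨n, ⟨hn, fun i hi => h ⟨i, hi⟩⟩, List.suffix_refl n⟩

/-- if all outcomes below `m` are in `Y`, then `m ∈ win_a(Y)` -/
lemma aux_pure_win (G : Game Agent PropVar) (a : Agent) (Y : Set (List ℕ)) :
    ∀ m, m ∈ G.Node → (∀ w ∈ G.outcomes, m <:+ w → w ∈ Y) → G.Win a Y m := by
  obtain ⟨B, hB⟩ := G.aux_exists_bound
  suffices H : ∀ k, ∀ m, m ∈ G.Node → B ≤ m.length + k →
      (∀ w ∈ G.outcomes, m <:+ w → w ∈ Y) → G.Win a Y m by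
    exact fun m hm hp => H B m hm (by omega) hp
  intro k
  induction k with
  | zero =>
    intro m hm hlen hp
    have hleaf : ∀ i : ℕ, i :: m ∉ G.Node := by
      intro i hi
      have := hB _ hi
      simp [List.length_cons] at this
      omega
    exact Win.mem m (hp m ⟨hm, hleaf⟩ (List.suffix_refl m))
  | succ k ih =>
    intro m hm hlen hp
    by_cases h : ∃ i, i :: m ∈ G.Node
    · have hchild : ∀ i : ℕ, i :: m ∈ G.Node → G.Win a Y (i :: m) := by
        intro i hi
        exact ih (i :: m) hi (by simp [List.length_cons]; omega)
          (fun w hw hs => hp w hw ((List.suffix_cons i m).trans hs))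
      by_cases hl : G.label m = a
      · obtain ⟨i, hi⟩ := h
        exact Win.own m hm hl i hi (hchild i hi)
      · exact Win.other m hm hl h hchild
    · exact Win.mem m (hp m ⟨hm, fun i hi => h ⟨i, hi⟩⟩ (List.suffix_refl m))

lemma aux_truth_subset (G : Game Agent PropVar) (φ : Formula Agent PropVar) :
    G.truth φ ⊆ G.outcomes := by
  induction φ with
  | var p => exact fun w hw => hw.1
  | neg φ ih => exact fun w hw => hw.1
  | and φ ψ ihφ ihψ => exact fun w hw => ihφ hw.1
  | C a φ ih => exact fun w hw => ih hw.1
  | S a φ ih => exact fun w hw => hw.1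

lemma aux_gap_subset (G : Game Agent PropVar) (φ : Formula Agent PropVar) (i : ℕ) :
    G.gapCIter φ (i + 1) ⊆ G.gapCIter φ i := fun _ hw => hw.1

lemma aux_gap_subset_truth (G : Game Agent PropVar) (φ : Formula Agent PropVar) :
    ∀ i : ℕ, G.gapCIter φ i ⊆ G.truth φ := by
  intro i
  induction i with
  | zero => exact le_refl _
  | succ i ih => exact (G.aux_gap_subset φ i).trans ih

lemma aux_suffix_cons_of_ne {n u : List ℕ} (h : n <:+ u) (hne : u ≠ n) :
    ∃ i, i :: n <:+ u := by
  obtain ⟨l, rfl⟩ := h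
  rcases List.eq_nil_or_concat l with rfl | ⟨L, i, rfl⟩
  · simp at hne
  · exact ⟨i, L, by simp⟩

/-- Key lemma: if `∅ ≠ X ⊆ Ω` and `Ω ∖ X ≠ ∅`, then some agent is
counterfactually responsible for `X` at some outcome. -/
lemma aux_key (G : Game Agent PropVar) {X : Set (List ℕ)} (hX : X ⊆ G.outcomes)
    (hne : X.Nonempty) (hco : (G.outcomes \ X).Nonempty) :
    ∃ a w, w ∈ G.Cset a X := by
  classical
  set M : Set (List ℕ) :=
    {n | n ∈ G.Node ∧ (∃ w ∈ G.outcomes, n <:+ w ∧ w ∈ X) ∧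
      (∃ w ∈ G.outcomes, n <:+ w ∧ w ∉ X)} with hM
  have hMfin : M.Finite := G.finite.subset (fun n hn => hn.1)
  have hMne : M.Nonempty := by
    obtain ⟨w1, hw1⟩ := hne
    obtain ⟨w2, hw2⟩ := hco
    exact ⟨[], G.root_mem, ⟨w1, hX hw1, List.nil_suffix, hw1⟩,
      ⟨w2, hw2.1, List.nil_suffix, hw2.2⟩⟩
  obtain ⟨n, hnM, hmax⟩ := hMfin.exists_maximalFor List.length M hMne
  obtain ⟨hnNode, ⟨wX, hwXo, hwXs, hwXin⟩, ⟨wC, hwCo, hwCs, hwCout⟩⟩ := hnM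
  -- n has a child, hence is not an outcome
  have hchild : ∃ i, i :: n ∈ G.Node := by
    have hneq : wX ≠ wC := fun h => hwCout (h ▸ hwXin)
    by_cases h : wX = n
    · obtain ⟨i, hi⟩ := aux_suffix_cons_of_ne hwCs (fun hc => hneq (h.trans hc.symm))
      exact ⟨i, G.aux_node_of_suffix hwCo.1 hi⟩
    · obtain ⟨i, hi⟩ := aux_suffix_cons_of_ne hwXs h
      exact ⟨i, G.aux_node_of_suffix hwXo.1 hi⟩
  have hnout : n ∉ G.outcomes := by
    intro h
    obtain ⟨i, hi⟩ := hchild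
    exact h.2 i hi
  -- child below wC
  have hwCne : wC ≠ n := fun h => hnout (h ▸ hwCo)
  obtain ⟨iC, hiCs⟩ := aux_suffix_cons_of_ne hwCs hwCne
  have hiCnode : iC :: n ∈ G.Node := G.aux_node_of_suffix hwCo.1 hiCs
  -- the child iC :: n is "pure": all outcomes below it are outside X
  have hpure : ∀ w ∈ G.outcomes, iC :: n <:+ w → w ∈ G.outcomes \ X := by
    intro w hw hs
    refine ⟨hw, fun hwin => ?_⟩
    have hmem : iC :: n ∈ M :=
      ⟨hiCnode, ⟨w, hw, hs, hwin⟩, ⟨wC, hwCo, hiCs, hwCout⟩⟩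
    have := hmax hmem (by simp [List.length_cons])
    simp [List.length_cons] at this
  have hwin2 : G.Win (G.label n) (G.outcomes \ X) (iC :: n) :=
    G.aux_pure_win (G.label n) _ (iC :: n) hiCnode hpure
  have hwinn : G.Win (G.label n) (G.outcomes \ X) n :=
    Win.own n hnNode rfl iC hiCnode hwin2
  exact ⟨G.label n, wX, hwXin, n, hwXs, hwinn⟩

end Game

/-- for any extensive form game `G` and formula `φ` with `⟦φ⟧ ⊊ Ω(G)`,
the truth set `⟦G^c_i(φ)⟧` is empty for every `i ≥ |Ω(G)| − 1`. -/
theorem no_higher_order_gapC {Agent PropVar : Type} [Fintype Agent]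
    (G : Game Agent PropVar) (φ : Formula Agent PropVar)
    (hφ : G.truth φ ⊂ G.outcomes)
    (i : ℕ) (hi : G.outcomes.ncard - 1 ≤ i) :
    G.gapCIter φ i = ∅ := by
  have houtfin : G.outcomes.Finite := G.finite.subset (fun w hw => hw.1)
  have hgapfin : ∀ j, (G.gapCIter φ j).Finite := fun j =>
    houtfin.subset ((G.aux_gap_subset_truth φ j).trans (G.aux_truth_subset φ))
  obtain ⟨w0, hw0⟩ := Set.exists_of_ssubset hφ
  -- the cardinality decreases strictly at each step (while nonempty)
  have hcard : ∀ j : ℕ, (G.gapCIter φ j).Nonempty →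
      j + (G.gapCIter φ j).ncard ≤ (G.truth φ).ncard := by
    intro j
    induction j with
    | zero => intro _; simp [Game.gapCIter]
    | succ j ih =>
      intro hne
      have hnej : (G.gapCIter φ j).Nonempty := hne.mono (G.aux_gap_subset φ j)
      have hsub : G.gapCIter φ j ⊆ G.outcomes :=
        (G.aux_gap_subset_truth φ j).trans (G.aux_truth_subset φ)
      have hcone : (G.outcomes \ G.gapCIter φ j).Nonempty :=
        ⟨w0, hw0.1, fun h => hw0.2 (G.aux_gap_subset_truth φ j h)⟩
      obtain ⟨a, w, hw⟩ := G.aux_key hsub hnej hcone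
      have hwj : w ∈ G.gapCIter φ j := hw.1
      have hwnot : w ∉ G.gapCIter φ (j + 1) := by
        intro hmem
        have := hmem.2
        rw [Set.mem_iInter] at this
        exact (this a).2 hw
      have hss : G.gapCIter φ (j + 1) ⊂ G.gapCIter φ j :=
        ⟨G.aux_gap_subset φ j, fun h => hwnot (h hwj)⟩
      have hlt : (G.gapCIter φ (j + 1)).ncard < (G.gapCIter φ j).ncard :=
        Set.ncard_lt_ncard hss (hgapfin j)
      have := ih hnej
      omega
  by_contra h
  have hne : (G.gapCIter φ i).Nonempty := Set.nonempty_iff_ne_empty.mpr h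
  have h1 := hcard i hne
  have h2 : (G.truth φ).ncard < G.outcomes.ncard := Set.ncard_lt_ncard hφ houtfin
  have h3 : 0 < (G.gapCIter φ i).ncard := (Set.ncard_pos (hgapfin i)).mpr hne
  omega
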